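/- Let 0 < α < 1, let u : [0,T] → ℝ be continuously differentiable, let u* ∈ ℝ, and set V(t) = (1/2)(u(t) − u*)². Then for every t ∈ (0,T], the Caputo fractional derivative of V of order α is bounded by (u(t) − u*) times the Caputo fractional derivative of u of order α: (1/Γ(1−α)) ∫₀ᵗ V′(s)(t − s)^(−α) ds ≤ (u(t) − u*) · (1/Γ(1−α)) ∫₀ᵗ u′(s)(t − s)^(−α) ds. -/

import Mathlib

/-- For `0 < α < 1` and a continuously differentiable `u : [0,T] → ℝ`, with
`V t = (1/2)(u t - u*)²` (so `V′ s = (u s - u*) u′ s`), the Caputo fractional derivative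
of order `α` of `V` is bounded by `(u t - u*)` times that of `u`, for every `t ∈ (0,T]`. -/
theorem caputo_deriv_half_square_le (α T : ℝ) (hα0 : 0 < α) (hα1 : α < 1) (hT : 0 < T)
    (u u' : ℝ → ℝ) (ustar : ℝ)
    (hderiv : ∀ s ∈ Set.Icc (0:ℝ) T, HasDerivAt u (u' s) s)
    (hcont : ContinuousOn u' (Set.Icc (0:ℝ) T)) :
    ∀ t ∈ Set.Ioc (0:ℝ) T,
      (1 / Real.Gamma (1 - α)) *
          ∫ s in (0:ℝ)..t, ((u s - ustar) * u' s) * (t - s) ^ (-α)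
        ≤ (u t - ustar) *
            ((1 / Real.Gamma (1 - α)) * ∫ s in (0:ℝ)..t, u' s * (t - s) ^ (-α)) := by
  intro t ht
  obtain ⟨ht0, htT⟩ := ht
  have hΓ : 0 < Real.Gamma (1 - α) := Real.Gamma_pos_of_pos (by linarith)
  have hsub : Set.Icc (0:ℝ) t ⊆ Set.Icc 0 T := Set.Icc_subset_Icc le_rfl htT
  have hucont : ContinuousOn u (Set.Icc (0:ℝ) T) := fun s hs =>
    (hderiv s hs).continuousAt.continuousWithinAt
  have huIcc : Set.uIcc (0:ℝ) t = Set.Icc 0 t := Set.uIcc_of_le ht0.le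
  -- kernel integrability
  have hker : IntervalIntegrable (fun s => (t - s) ^ (-α)) MeasureTheory.volume 0 t := by
    have h := (intervalIntegral.intervalIntegrable_rpow' (a := 0) (b := t) (r := -α)
      (by linarith)).comp_sub_left t
    simpa using h.symm
  have h1 : IntervalIntegrable (fun s => u' s * (t - s) ^ (-α)) MeasureTheory.volume 0 t :=
    hker.continuousOn_mul (by rw [huIcc]; exact hcont.mono hsub)
  have h2 : IntervalIntegrable (fun s => ((u s - ustar) * u' s) * (t - s) ^ (-α))
      MeasureTheory.volume 0 t :=
    hker.continuousOn_mul (by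
      rw [huIcc]
      exact ((hucont.mono hsub).sub continuousOn_const).mul (hcont.mono hsub))
  have h3 : IntervalIntegrable (fun s => (u t - ustar) * (u' s * (t - s) ^ (-α)))
      MeasureTheory.volume 0 t := h1.const_mul _
  -- key nonnegativity
  have key : 0 ≤ ∫ s in (0:ℝ)..t, ((u t - u s) * u' s) * (t - s) ^ (-α) := by
    obtain ⟨L, hL⟩ := isCompact_Icc.exists_bound_of_continuousOn hcont
    have hlip : ∀ s ∈ Set.Icc (0:ℝ) t, |u t - u s| ≤ L * (t - s) := by
      intro s hs
      have h := Convex.norm_image_sub_le_of_norm_hasDerivWithin_le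
        (f := u) (f' := u') (s := Set.Icc (0:ℝ) T)
        (fun x hx => (hderiv x hx).hasDerivWithinAt) hL (convex_Icc _ _)
        (hsub hs) ⟨ht0.le, htT⟩
      rw [Real.norm_eq_abs, Real.norm_eq_abs] at h
      calc |u t - u s| ≤ L * |t - s| := h
        _ = L * (t - s) := by rw [abs_of_nonneg (by linarith [hs.2])]
    set w : ℝ → ℝ := fun s => (u t - u s) ^ 2 / 2 with hw_def
    set f : ℝ → ℝ := fun s => ((u t - u s) * u' s) * (t - s) ^ (-α) with hf_def
    have hfint : IntervalIntegrable f MeasureTheory.volume 0 t :=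
      hker.continuousOn_mul (by
        rw [huIcc]
        exact (continuousOn_const.sub (hucont.mono hsub)).mul (hcont.mono hsub))
    set Φ : ℝ → ℝ := fun x => ∫ s in (0:ℝ)..x, f s with hΦ_def
    have hbound : ∀ x ∈ Set.Ico (0:ℝ) t, -(L ^ 2 / 2) * (t - x) ^ ((2:ℝ) - α) ≤ Φ x := by
      intro x hx
      have hx0 : (0:ℝ) ≤ x := hx.1
      have hxt : x < t := hx.2
      have htx : (0:ℝ) < t - x := by linarith
      set g : ℝ → ℝ := fun s => w s * (α * (t - s) ^ (-α - 1)) with hg_def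
      set H : ℝ → ℝ := fun s => -(w s * (t - s) ^ (-α)) with hH_def
      have huIccx : Set.uIcc (0:ℝ) x = Set.Icc 0 x := Set.uIcc_of_le hx0
      have hH : ∀ s ∈ Set.uIcc (0:ℝ) x, HasDerivAt H (f s - g s) s := by
        intro s hs
        rw [huIccx] at hs
        have hts : (0:ℝ) < t - s := by linarith [hs.2]
        have hsT : s ∈ Set.Icc (0:ℝ) T := ⟨hs.1, by linarith [hs.2]⟩
        have hid : HasDerivAt (fun s : ℝ => t - s) (-1) s := (hasDerivAt_id s).const_sub t
        have hk : HasDerivAt (fun s : ℝ => (t - s) ^ (-α)) ((-1) * -α * (t - s) ^ (-α - 1)) s :=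
          hid.rpow_const (Or.inl hts.ne')
        have hu := hderiv s hsT
        have hwD : HasDerivAt w ((2 : ℕ) * (u t - u s) ^ (2 - 1) * -(u' s) / 2) s :=
          ((hu.const_sub (u t)).pow 2).div_const 2
        have : HasDerivAt H _ s := (hwD.mul hk).neg
        convert this using 1
        simp only [hf_def, hg_def, hw_def, pow_one]
        push_cast
        ring
      have hcontk : ContinuousOn (fun s : ℝ => (t - s) ^ (-α)) (Set.Icc 0 x) := by
        apply ContinuousOn.rpow_const (by fun_prop)
        intro s hs
        have h : (0:ℝ) < t - s := by linarith [hs.2]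
        exact Or.inl h.ne'
      have hcontk1 : ContinuousOn (fun s : ℝ => (t - s) ^ (-α - 1)) (Set.Icc 0 x) := by
        apply ContinuousOn.rpow_const (by fun_prop)
        intro s hs
        have h : (0:ℝ) < t - s := by linarith [hs.2]
        exact Or.inl h.ne'
      have hcontw : ContinuousOn w (Set.Icc 0 x) := by
        have : ContinuousOn u (Set.Icc (0:ℝ) x) :=
          hucont.mono (fun s hs => ⟨hs.1, by linarith [hs.2]⟩)
        exact ((continuousOn_const.sub this).pow 2).div_const 2
      have hcontu' : ContinuousOn u' (Set.Icc (0:ℝ) x) :=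
        hcont.mono (fun s hs => ⟨hs.1, by linarith [hs.2]⟩)
      have hcontuu : ContinuousOn u (Set.Icc (0:ℝ) x) :=
        hucont.mono (fun s hs => ⟨hs.1, by linarith [hs.2]⟩)
      have hgint : IntervalIntegrable g MeasureTheory.volume 0 x := by
        apply ContinuousOn.intervalIntegrable
        rw [huIccx]
        exact hcontw.mul (continuousOn_const.mul hcontk1)
      have hfix : IntervalIntegrable f MeasureTheory.volume 0 x := by
        apply ContinuousOn.intervalIntegrable
        rw [huIccx]
        exact ((continuousOn_const.sub hcontuu).mul hcontu').mul hcontk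
      have hfgint : IntervalIntegrable (fun s => f s - g s) MeasureTheory.volume 0 x :=
        hfix.sub hgint
      have hIBP : ∫ s in (0:ℝ)..x, (f s - g s) = H x - H 0 :=
        intervalIntegral.integral_eq_sub_of_hasDerivAt hH hfgint
      have hsplit : Φ x = (H x - H 0) + ∫ s in (0:ℝ)..x, g s := by
        rw [← hIBP, ← intervalIntegral.integral_add hfgint hgint]
        simp [hΦ_def]
      have hgnn : 0 ≤ ∫ s in (0:ℝ)..x, g s := by
        apply intervalIntegral.integral_nonneg hx0
        intro s hs
        have hts : (0:ℝ) < t - s := by linarith [hs.2]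
        have : (0:ℝ) ≤ (t - s) ^ (-α - 1) := Real.rpow_nonneg hts.le _
        simp only [hg_def, hw_def]
        positivity
      have hH0 : H 0 ≤ 0 := by
        simp only [hH_def, hw_def, neg_nonpos]
        have : (0:ℝ) ≤ (t - 0) ^ (-α) := Real.rpow_nonneg (by linarith) _
        positivity
      have hHx : -(L ^ 2 / 2) * (t - x) ^ ((2:ℝ) - α) ≤ H x := by
        have hxmem : x ∈ Set.Icc (0:ℝ) t := ⟨hx0, hxt.le⟩
        have habs := hlip x hxmem
        have hsq : (u t - u x) ^ 2 ≤ (L * (t - x)) ^ 2 := by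
          have := abs_le.mp habs
          nlinarith [this.1, this.2]
        have hrw : (t - x) ^ ((2:ℝ) - α) = (t - x) ^ 2 * (t - x) ^ (-α) := by
          rw [show (2:ℝ) - α = (2:ℝ) + (-α) by ring, Real.rpow_add htx, Real.rpow_two]
        have hknn : (0:ℝ) ≤ (t - x) ^ (-α) := Real.rpow_nonneg htx.le _
        simp only [hH_def, hw_def, hrw]
        nlinarith [mul_le_mul_of_nonneg_right hsq hknn]
      clear_value w f Φ g H
      linarith [hsplit, hgnn, hH0, hHx]
    -- continuity of the primitive at t and limit
    have hcontΦ : ContinuousWithinAt Φ (Set.Icc 0 t) t := by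
      apply intervalIntegral.continuousWithinAt_primitive (MeasureTheory.measure_singleton t)
      simpa [min_self, ht0.le] using hfint
    have hmem : Set.Icc (0:ℝ) t ∈ nhdsWithin t (Set.Iio t) :=
      Filter.mem_of_superset (Ioo_mem_nhdsLT_of_mem ⟨ht0, le_rfl⟩) Set.Ioo_subset_Icc_self
    have htend : Filter.Tendsto Φ (nhdsWithin t (Set.Iio t)) (nhds (Φ t)) :=
      hcontΦ.tendsto.mono_left (nhdsWithin_le_of_mem hmem)
    have htend2 : Filter.Tendsto (fun x => -(L ^ 2 / 2) * (t - x) ^ ((2:ℝ) - α))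
        (nhdsWithin t (Set.Iio t)) (nhds 0) := by
      have hsubt : Filter.Tendsto (fun x : ℝ => t - x) (nhdsWithin t (Set.Iio t)) (nhds 0) := by
        have : Filter.Tendsto (fun x : ℝ => t - x) (nhds t) (nhds (t - t)) :=
          (continuous_const.sub continuous_id).tendsto t
        simpa using this.mono_left nhdsWithin_le_nhds
      have hpow : Filter.Tendsto (fun x : ℝ => (t - x) ^ ((2:ℝ) - α))
          (nhdsWithin t (Set.Iio t)) (nhds 0) := by
        have hc : ContinuousAt (fun y : ℝ => y ^ ((2:ℝ) - α)) 0 :=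
          Real.continuousAt_rpow_const 0 _ (Or.inr (by linarith))
        have := hc.tendsto.comp hsubt
        simpa [Function.comp_def, Real.zero_rpow (by linarith : (2:ℝ) - α ≠ 0)] using this
      have := hpow.const_mul (-(L ^ 2 / 2))
      simpa using this
    have hfin : (0:ℝ) ≤ Φ t := by
      refine le_of_tendsto_of_tendsto htend2 htend ?_
      filter_upwards [Ioo_mem_nhdsLT_of_mem (Set.mem_Ioc.mpr ⟨ht0, le_rfl⟩)] with x hx
      exact hbound x ⟨hx.1.le, hx.2⟩
    exact hfin
  -- assemble
  have hconv : ∫ s in (0:ℝ)..t, ((u t - u s) * u' s) * (t - s) ^ (-α)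
      = (u t - ustar) * (∫ s in (0:ℝ)..t, u' s * (t - s) ^ (-α))
        - ∫ s in (0:ℝ)..t, ((u s - ustar) * u' s) * (t - s) ^ (-α) := by
    rw [← intervalIntegral.integral_const_mul, ← intervalIntegral.integral_sub h3 h2]
    apply intervalIntegral.integral_congr
    intro s _
    ring
  have hle : ∫ s in (0:ℝ)..t, ((u s - ustar) * u' s) * (t - s) ^ (-α)
      ≤ (u t - ustar) * ∫ s in (0:ℝ)..t, u' s * (t - s) ^ (-α) := by linarith [key, hconv]
  have hΓnn : 0 ≤ 1 / Real.Gamma (1 - α) := by positivity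
  calc (1 / Real.Gamma (1 - α)) * ∫ s in (0:ℝ)..t, ((u s - ustar) * u' s) * (t - s) ^ (-α)
      ≤ (1 / Real.Gamma (1 - α)) *
        ((u t - ustar) * ∫ s in (0:ℝ)..t, u' s * (t - s) ^ (-α)) :=
        mul_le_mul_of_nonneg_left hle hΓnn
    _ = (u t - ustar) * ((1 / Real.Gamma (1 - α)) * ∫ s in (0:ℝ)..t, u' s * (t - s) ^ (-α)) := by
        ring
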